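/- arXiv:2502.12585 — 7 statements merged into one kernel-verified Lean document; each statement's English description precedes it below -/
import Mathlib

section
/- A point x of a dynamical system (X, T, π) is asymptotically τ-periodic (i.e., there exists a τ-periodic point p with ρ(π(t,x), π(t,p)) → 0 as t → +∞) if and only if the sequence {π(kτ, x)}_{k=0}^∞ converges in X. -/
open Filter Topology

/-- A point `x` of a dynamical system `(X, π)` (on a complete metric space) is
asymptotically `τ`-periodic iff the sequence `π (k τ) x` converges. -/
theorem stmt0 {X : Type*} [MetricSpace X] [CompleteSpace X]
    (π : ℝ → X → X)
    (hcont : Continuous fun p : ℝ × X => π p.1 p.2)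
    (hπ0 : ∀ x : X, π 0 x = x)
    (hπadd : ∀ t s : ℝ, ∀ x : X, π (t + s) x = π t (π s x))
    (x : X) (τ : ℝ) (hτ : 0 < τ) :
    (∃ p : X, π τ p = p ∧
        Tendsto (fun t : ℝ => dist (π t x) (π t p)) atTop (nhds 0)) ↔
      ∃ l : X, Tendsto (fun k : ℕ => π ((k : ℝ) * τ) x) atTop (nhds l) := by
  have key : ∀ p : X, π τ p = p → ∀ k : ℕ, π ((k : ℝ) * τ) p = p := by
    intro p hp k
    induction k with
    | zero => simpa using hπ0 p
    | succ n ih =>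
        have : ((n : ℝ) + 1) * τ = (n : ℝ) * τ + τ := by ring
        rw [Nat.cast_succ, this, hπadd, hp, ih]
  constructor
  · rintro ⟨p, hp, hd⟩
    refine ⟨p, ?_⟩
    have hmul : Tendsto (fun k : ℕ => (k : ℝ) * τ) atTop atTop :=
      Tendsto.atTop_mul_const hτ tendsto_natCast_atTop_atTop
    have h1 : Tendsto (fun k : ℕ => dist (π ((k : ℝ) * τ) x) (π ((k : ℝ) * τ) p))
        atTop (nhds 0) := hd.comp hmul
    have h2 : Tendsto (fun k : ℕ => dist (π ((k : ℝ) * τ) x) p) atTop (nhds 0) := by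
      simpa only [key p hp] using h1
    exact tendsto_iff_dist_tendsto_zero.mpr (by simpa using h2)
  · rintro ⟨l, hl⟩
    -- l is τ-periodic
    have hcτ : Continuous fun y : X => π τ y := by
      have : Continuous fun y : X => ((τ, y) : ℝ × X) := by continuity
      exact hcont.comp this
    have hper : π τ l = l := by
      have h1 : Tendsto (fun k : ℕ => π τ (π ((k : ℝ) * τ) x)) atTop (nhds (π τ l)) :=
        (hcτ.tendsto l).comp hl
      have h2 : Tendsto (fun k : ℕ => π (((k + 1 : ℕ) : ℝ) * τ) x) atTop (nhds l) :=
        hl.comp (tendsto_add_atTop_nat 1)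
      have heq : (fun k : ℕ => π τ (π ((k : ℝ) * τ) x))
          = fun k : ℕ => π (((k + 1 : ℕ) : ℝ) * τ) x := by
        funext k
        rw [← hπadd]
        congr 1
        push_cast
        ring
      rw [heq] at h1
      exact tendsto_nhds_unique h1 h2
    refine ⟨l, hper, ?_⟩
    -- compact set and uniform continuity
    set K2 : Set X := insert l (Set.range fun k : ℕ => π ((k : ℝ) * τ) x) with hK2def
    have hK2 : IsCompact K2 := hl.isCompact_insert_range
    have hK : IsCompact (Set.Icc (0 : ℝ) τ ×ˢ K2) := (isCompact_Icc).prod hK2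
    have hUC : UniformContinuousOn (fun p : ℝ × X => π p.1 p.2)
        (Set.Icc (0 : ℝ) τ ×ˢ K2) :=
      hK.uniformContinuousOn_of_continuous hcont.continuousOn
    rw [Metric.tendsto_atTop]
    intro ε hε
    rw [Metric.uniformContinuousOn_iff] at hUC
    obtain ⟨δ, hδ, hδε⟩ := hUC ε hε
    obtain ⟨N, hN⟩ := (Metric.tendsto_atTop.mp hl) δ hδ
    refine ⟨(N : ℝ) * τ + 1, fun t ht => ?_⟩
    have htpos : (0 : ℝ) ≤ t := by
      have : (0 : ℝ) ≤ (N : ℝ) * τ := by positivity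
      linarith
    set k : ℕ := ⌊t / τ⌋₊ with hk
    have hk1 : (k : ℝ) * τ ≤ t := by
      have := Nat.floor_le (by positivity : (0 : ℝ) ≤ t / τ)
      calc (k : ℝ) * τ ≤ (t / τ) * τ := by nlinarith
        _ = t := by field_simp
    have hk2 : t < ((k : ℝ) + 1) * τ := by
      have h' := (div_lt_iff₀ hτ).mp (Nat.lt_floor_add_one (t / τ))
      linarith
    have hkN : N ≤ k := by
      rw [hk]
      apply Nat.le_floor
      rw [le_div_iff₀ hτ]
      linarith
    set s : ℝ := t - (k : ℝ) * τ with hs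
    have hs0 : 0 ≤ s := by simp [hs]; linarith
    have hsτ : s ≤ τ := by simp [hs]; nlinarith
    have hts : t = s + (k : ℝ) * τ := by ring
    have e1 : π t x = π s (π ((k : ℝ) * τ) x) := by rw [hts, hπadd]
    have e2 : π t l = π s l := by rw [hts, hπadd, key l hper]
    rw [e1, e2, Real.dist_eq, sub_zero, abs_of_nonneg dist_nonneg]
    have hmem1 : ((s, π ((k : ℝ) * τ) x) : ℝ × X) ∈ Set.Icc (0 : ℝ) τ ×ˢ K2 := by
      constructor
      · exact ⟨hs0, hsτ⟩
      · exact Set.mem_insert_iff.mpr (Or.inr ⟨k, rfl⟩)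
    have hmem2 : ((s, l) : ℝ × X) ∈ Set.Icc (0 : ℝ) τ ×ˢ K2 := by
      exact ⟨⟨hs0, hsτ⟩, Set.mem_insert _ _⟩
    have hdist : dist ((s, π ((k : ℝ) * τ) x) : ℝ × X) ((s, l) : ℝ × X) < δ := by
      rw [Prod.dist_eq]
      simp only [dist_self]
      rw [max_lt_iff]
      exact ⟨hδ, hN k hkN⟩
    exact hδε _ hmem1 _ hmem2 hdist
end

section
/- Let x be a positively Lagrange stable point of a dynamical system (X, T, π) and τ > 0. Then the motion π(t,x) is remotely τ-periodic (i.e., ρ(π(t+τ,x), π(t,x)) → 0 as t → +∞) if and only if every point p in the ω-limit set ω_x of x is τ-periodic. -/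
open Filter Topology

/-- For a positively Lagrange stable point `x`, the motion is remotely `τ`-periodic
iff every point of the ω-limit set of `x` is `τ`-periodic. -/
theorem stmt1 {X : Type*} [MetricSpace X] [CompleteSpace X]
    (π : ℝ → X → X)
    (hcont : Continuous fun p : ℝ × X => π p.1 p.2)
    (hπ0 : ∀ x : X, π 0 x = x)
    (hπadd : ∀ t s : ℝ, ∀ x : X, π (t + s) x = π t (π s x))
    (x : X)
    (hLS : IsCompact (closure ((fun t : ℝ => π t x) '' Set.Ici 0)))
    (τ : ℝ) (hτ : 0 < τ) :
    Tendsto (fun t : ℝ => dist (π (t + τ) x) (π t x)) atTop (nhds 0) ↔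
      ∀ p : X,
        (∃ tn : ℕ → ℝ, Tendsto tn atTop atTop ∧
            Tendsto (fun n => π (tn n) x) atTop (nhds p)) →
        π τ p = p := by
  have hcτ : Continuous (π τ) := hcont.comp (continuous_const.prodMk continuous_id)
  constructor
  · rintro hT p ⟨tn, htn, hconv⟩
    have h1 : Tendsto (fun n => π (tn n + τ) x) atTop (nhds (π τ p)) := by
      have h1' : Tendsto (fun n => π τ (π (tn n) x)) atTop (nhds (π τ p)) :=
        (hcτ.continuousAt.tendsto).comp hconv
      convert h1' using 2 with n
      rw [add_comm, hπadd]
    have h2 : Tendsto (fun n => dist (π (tn n + τ) x) (π (tn n) x)) atTop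
        (nhds (dist (π τ p) p)) := h1.dist hconv
    have h3 : Tendsto (fun n => dist (π (tn n + τ) x) (π (tn n) x)) atTop (nhds 0) :=
      hT.comp htn
    exact eq_of_dist_eq_zero (tendsto_nhds_unique h2 h3)
  · intro hP
    by_contra h
    have hex : ∃ ε > 0, ∃ᶠ t in atTop, ε ≤ dist (π (t + τ) x) (π t x) := by
      by_contra hc
      push_neg at hc
      apply h
      rw [Metric.tendsto_nhds]
      intro ε hε
      have := hc ε hε
      filter_upwards [this] with t ht
      rw [Real.dist_eq, sub_zero, abs_of_nonneg dist_nonneg]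
      exact ht
    obtain ⟨ε, hε, hfreq⟩ := hex
    rw [Filter.frequently_atTop] at hfreq
    choose tn htn1 htn2 using fun n : ℕ => hfreq n
    have htn : Tendsto tn atTop atTop :=
      tendsto_atTop_mono htn1 tendsto_natCast_atTop_atTop
    have hmem : ∀ n, π (tn n) x ∈ closure ((fun t : ℝ => π t x) '' Set.Ici 0) := by
      intro n
      exact subset_closure ⟨tn n, le_trans (Nat.cast_nonneg n) (htn1 n), rfl⟩
    obtain ⟨p, _, φ, hφ, hsub⟩ := hLS.tendsto_subseq hmem
    have hfix : π τ p = p :=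
      hP p ⟨tn ∘ φ, htn.comp hφ.tendsto_atTop, hsub⟩
    have h1 : Tendsto (fun k => π (tn (φ k) + τ) x) atTop (nhds p) := by
      have h1' : Tendsto (fun k => π τ (π (tn (φ k)) x)) atTop (nhds (π τ p)) :=
        (hcτ.continuousAt.tendsto).comp hsub
      rw [hfix] at h1'
      convert h1' using 2 with k
      rw [add_comm, hπadd]
    have h2 : Tendsto (fun k => dist (π (tn (φ k) + τ) x) (π (tn (φ k)) x)) atTop
        (nhds 0) := by
      have := h1.dist hsub
      simpa using this
    have : ε ≤ 0 := ge_of_tendsto h2 (Filter.Eventually.of_forall fun k => htn2 (φ k))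
    linarith
end

section
/- Let x be a positively Lagrange stable point. Then the motion π(t,x) is remotely stationary (remotely τ-periodic for every τ > 0) if and only if every point of the ω-limit set ω_x is a stationary (fixed) point of the flow. -/
open Filter Topology

/-- For a positively Lagrange stable point `x`, the motion is remotely stationary
(remotely `τ`-periodic for every `τ > 0`) iff every point of the ω-limit set of `x`
is a stationary point. -/
theorem stmt2 {X : Type*} [MetricSpace X] [CompleteSpace X]
    (π : ℝ → X → X)
    (hcont : Continuous fun p : ℝ × X => π p.1 p.2)
    (hπ0 : ∀ x : X, π 0 x = x)
    (hπadd : ∀ t s : ℝ, ∀ x : X, π (t + s) x = π t (π s x))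
    (x : X)
    (hLS : IsCompact (closure ((fun t : ℝ => π t x) '' Set.Ici 0))) :
    (∀ τ : ℝ, 0 < τ →
        Tendsto (fun t : ℝ => dist (π (t + τ) x) (π t x)) atTop (nhds 0)) ↔
      ∀ p : X,
        (∃ tn : ℕ → ℝ, Tendsto tn atTop atTop ∧
            Tendsto (fun n => π (tn n) x) atTop (nhds p)) →
        ∀ t : ℝ, π t p = p := by
  have hπc : ∀ τ : ℝ, Continuous (π τ) := fun τ =>
    hcont.comp (continuous_const.prodMk continuous_id)
  constructor
  · rintro h p ⟨tn, htn, hp⟩ t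
    have key : ∀ τ : ℝ, 0 < τ → π τ p = p := by
      intro τ hτ
      have h1 : Tendsto (fun n => π (tn n + τ) x) atTop (nhds (π τ p)) := by
        have heq : (fun n => π (tn n + τ) x) = fun n => π τ (π (tn n) x) := by
          funext n; rw [add_comm, hπadd]
        rw [heq]
        exact ((hπc τ).tendsto p).comp hp
      have h2 : Tendsto (fun n => dist (π (tn n + τ) x) (π (tn n) x)) atTop (nhds 0) :=
        (h τ hτ).comp htn
      have h3 : Tendsto (fun n => π (tn n + τ) x) atTop (nhds p) := by
        rw [tendsto_iff_dist_tendsto_zero]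
        apply squeeze_zero (fun n => dist_nonneg)
          (fun n => dist_triangle _ (π (tn n) x) p)
        have := h2.add (tendsto_iff_dist_tendsto_zero.mp hp)
        simpa using this
      exact tendsto_nhds_unique h1 h3
    rcases lt_trichotomy t 0 with ht | ht | ht
    · have hk := key (-t) (by linarith)
      calc π t p = π t (π (-t) p) := by rw [hk]
        _ = π (t + -t) p := (hπadd t (-t) p).symm
        _ = p := by rw [add_neg_cancel, hπ0]
    · rw [ht, hπ0]
    · exact key t ht
  · intro h τ hτ
    by_contra hcon
    rw [Metric.tendsto_nhds] at hcon
    push_neg at hcon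
    obtain ⟨ε, hε, hfreq⟩ := hcon
    have hex : ∀ n : ℕ, ∃ t : ℝ, (n : ℝ) ≤ t ∧
        ε ≤ dist (dist (π (t + τ) x) (π t x)) 0 := by
      intro n
      obtain ⟨t, ht1, ht2⟩ := frequently_atTop.mp hfreq (n : ℝ)
      exact ⟨t, ht1, ht2⟩
    choose tn htn1 htn2 using hex
    have htnTop : Tendsto tn atTop atTop :=
      tendsto_atTop_mono htn1 tendsto_natCast_atTop_atTop
    have hmem : ∀ n, π (tn n) x ∈ closure ((fun t : ℝ => π t x) '' Set.Ici 0) := by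
      intro n
      exact subset_closure ⟨tn n, le_trans (Nat.cast_nonneg n) (htn1 n), rfl⟩
    obtain ⟨p, -, φ, hφ, hconv⟩ := hLS.tendsto_subseq hmem
    have hφTop : Tendsto (fun n => tn (φ n)) atTop atTop :=
      htnTop.comp hφ.tendsto_atTop
    have hconv' : Tendsto (fun n => π (tn (φ n)) x) atTop (nhds p) := hconv
    have hst : π τ p = p := h p ⟨fun n => tn (φ n), hφTop, hconv'⟩ τ
    have h1 : Tendsto (fun n => π (tn (φ n) + τ) x) atTop (nhds p) := by
      have heq : (fun n => π (tn (φ n) + τ) x) = fun n => π τ (π (tn (φ n)) x) := by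
        funext n; rw [add_comm, hπadd]
      rw [heq, ← hst]
      exact ((hπc τ).tendsto p).comp hconv'
    have hd : Tendsto (fun n => dist (π (tn (φ n) + τ) x) (π (tn (φ n)) x))
        atTop (nhds 0) := by
      simpa using h1.dist hconv'
    have hge : (0:ℝ) ≥ ε := by
      refine ge_of_tendsto hd (Eventually.of_forall fun n => ?_)
      have := htn2 (φ n)
      rwa [Real.dist_eq, sub_zero, abs_of_nonneg dist_nonneg] at this
    linarith
end

section
/- Let φ ∈ C(T, X) and τ > 0. Then lim_{t→+∞} ρ(φ(t+τ), φ(t)) = 0 if and only if lim_{t→+∞} β(σ(t+τ, φ), σ(t, φ)) = 0, where σ(h, φ) is the h-translate of φ and β is the metric of uniform convergence on compact sets on C(T, X). -/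
open Filter Topology

/-- `dist (φ (t+τ), φ t) → 0` as `t → +∞` iff the translates `σ(t+τ, φ)` and
`σ(t, φ)` become uniformly close on every compact set as `t → +∞` (i.e. the
distance in the compact-open metric `β` tends to `0`). -/
theorem stmt6 {X : Type*} [MetricSpace X] [CompleteSpace X]
    (φ : C(ℝ, X)) (τ : ℝ) (hτ : 0 < τ) :
    Tendsto (fun t : ℝ => dist (φ (t + τ)) (φ t)) atTop (nhds 0) ↔
      ∀ ε > (0 : ℝ), ∀ K : Set ℝ, IsCompact K →
        ∀ᶠ t : ℝ in atTop, ∀ s ∈ K,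
          dist (φ (s + t + τ)) (φ (s + t)) < ε := by
  constructor
  · intro h ε hε K hK
    obtain ⟨L, hL⟩ := hK.isBounded.subset_closedBall 0
    have h' : ∀ᶠ u : ℝ in atTop, dist (φ (u + τ)) (φ u) < ε := by
      have := Metric.tendsto_atTop.1 h ε hε
      obtain ⟨N, hN⟩ := this
      filter_upwards [eventually_ge_atTop N] with u hu
      have := hN u hu
      rwa [Real.dist_eq, sub_zero, abs_of_nonneg dist_nonneg] at this
    obtain ⟨N, hN⟩ := eventually_atTop.1 h'
    filter_upwards [eventually_ge_atTop (N + L)] with t ht s hs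
    have hsL : |s| ≤ L := by simpa [Real.dist_eq] using hL hs
    have : N ≤ s + t := by
      have := abs_le.1 hsL
      linarith
    exact hN _ this
  · intro h
    rw [Metric.tendsto_atTop]
    intro ε hε
    obtain ⟨N, hN⟩ := eventually_atTop.1 (h ε hε {0} isCompact_singleton)
    refine ⟨N, fun t ht => ?_⟩
    have := hN t ht 0 rfl
    simp only [zero_add] at this
    rwa [Real.dist_eq, sub_zero, abs_of_nonneg dist_nonneg]
end

section
/- Let φ ∈ C(T, X) be Lagrange stable. Then φ is remotely τ-periodic (lim_{t→+∞} ρ(φ(t+τ), φ(t)) = 0) if and only if every function in the ω-limit set ω_φ of φ under the shift dynamical system is τ-periodic. -/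
open Filter Topology

/-- The `h`-translate of a continuous function `φ : ℝ → X`. -/
noncomputable def translate7 {X : Type*} [MetricSpace X] (φ : C(ℝ, X)) (h : ℝ) :
    C(ℝ, X) :=
  φ.comp ⟨fun t => t + h, by continuity⟩

/-- A Lagrange stable `φ ∈ C(ℝ, X)` is remotely `τ`-periodic iff every function in
its ω-limit set under the shift dynamical system is `τ`-periodic. -/
theorem stmt7 {X : Type*} [MetricSpace X] [CompleteSpace X]
    (φ : C(ℝ, X))
    (hLS : IsCompact (closure {ψ : C(ℝ, X) | ∃ h : ℝ, ψ = translate7 φ h}))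
    (τ : ℝ) (hτ : 0 < τ) :
    Tendsto (fun t : ℝ => dist (φ (t + τ)) (φ t)) atTop (nhds 0) ↔
      ∀ ψ : C(ℝ, X),
        (∃ tn : ℕ → ℝ, Tendsto tn atTop atTop ∧
            Tendsto (fun n => translate7 φ (tn n)) atTop (nhds ψ)) →
        ∀ t : ℝ, ψ (t + τ) = ψ t := by
  constructor
  · rintro h ψ ⟨tn, htn, hconv⟩ t
    have h1 : Tendsto (fun n => (translate7 φ (tn n)) (t + τ)) atTop (𝓝 (ψ (t + τ))) :=
      ((continuous_eval_const (t + τ)).tendsto ψ).comp hconv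
    have h2 : Tendsto (fun n => (translate7 φ (tn n)) t) atTop (𝓝 (ψ t)) :=
      ((continuous_eval_const t).tendsto ψ).comp hconv
    have hd : Tendsto (fun n => dist ((translate7 φ (tn n)) (t + τ)) ((translate7 φ (tn n)) t))
        atTop (𝓝 (dist (ψ (t + τ)) (ψ t))) := h1.dist h2
    have h0 : Tendsto (fun n => dist ((translate7 φ (tn n)) (t + τ)) ((translate7 φ (tn n)) t))
        atTop (𝓝 0) := by
      have htt : Tendsto (fun n => t + tn n) atTop atTop :=
        tendsto_atTop_add_const_left _ t htn
      have := h.comp htt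
      simp only [Function.comp_def] at this
      simp only [translate7, ContinuousMap.comp_apply, ContinuousMap.coe_mk]
      convert this using 2 with n
      congr 1 <;> ring
    have := tendsto_nhds_unique hd h0
    exact dist_eq_zero.mp this
  · intro H
    by_contra hC
    rw [Metric.tendsto_nhds] at hC
    push_neg at hC
    obtain ⟨ε, hε, hfreq⟩ := hC
    have hex : ∀ n : ℕ, ∃ t : ℝ, (n : ℝ) ≤ t ∧ ε ≤ dist (φ (t + τ)) (φ t) := by
      intro n
      rcases frequently_atTop.mp hfreq (n : ℝ) with ⟨t, ht, hdt⟩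
      exact ⟨t, ht, by simpa [Real.dist_eq, abs_of_nonneg dist_nonneg] using hdt⟩
    choose tn htn hdist using hex
    have htnTop : Tendsto tn atTop atTop :=
      tendsto_atTop_mono htn tendsto_natCast_atTop_atTop
    set S : Set C(ℝ, X) := {ψ : C(ℝ, X) | ∃ h : ℝ, ψ = translate7 φ h}
    have hmem : ∀ n, translate7 φ (tn n) ∈ closure S :=
      fun n => subset_closure ⟨tn n, rfl⟩
    obtain ⟨ψ, -, θ, hθ, hconv⟩ := hLS.isSeqCompact hmem
    have hper := H ψ ⟨tn ∘ θ, htnTop.comp hθ.tendsto_atTop, hconv⟩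
    have h1 : Tendsto (fun k => (translate7 φ (tn (θ k))) τ) atTop (𝓝 (ψ τ)) :=
      ((continuous_eval_const τ).tendsto ψ).comp hconv
    have h2 : Tendsto (fun k => (translate7 φ (tn (θ k))) 0) atTop (𝓝 (ψ 0)) :=
      ((continuous_eval_const 0).tendsto ψ).comp hconv
    have hd : Tendsto (fun k => dist ((translate7 φ (tn (θ k))) τ) ((translate7 φ (tn (θ k))) 0))
        atTop (𝓝 (dist (ψ τ) (ψ 0))) := h1.dist h2
    have hψ : dist (ψ τ) (ψ 0) = 0 := by
      have := hper 0
      rw [zero_add] at this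
      rw [this, dist_self]
    have hge : ε ≤ dist (ψ τ) (ψ 0) := by
      refine le_of_tendsto_of_tendsto tendsto_const_nhds hd (Eventually.of_forall fun k => ?_)
      simp only [translate7, ContinuousMap.comp_apply, ContinuousMap.coe_mk]
      have := hdist (θ k)
      convert this using 3
      · rfl
      · ring
      · ring
    rw [hψ] at hge
    exact absurd hge (not_le.mpr hε)
end

section
/- If the equation x' = A(t)x has an exponential trichotomy on ℝ with trichotomy constants N, ν, then for every bounded continuous f : ℝ → B, the function φ(t) := ∫_{−∞}^{+∞} G(t,τ) f(τ) dτ (with G the trichotomy Green function) is a bounded solution of x' = A(t)x + f(t) satisfying ‖φ‖_∞ ≤ (2N/ν)‖f‖_∞. -/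
open Real MeasureTheory Set Filter intervalIntegral
open scoped Topology

section AuxTrichotomy

variable {E : Type*} [NormedAddCommGroup E] [NormedSpace ℝ E] [CompleteSpace E]

lemma auxT_locBound (U : ℝ → E →L[ℝ] E) (hc : ∀ x : E, Continuous fun s => U s x)
    (a b : ℝ) : ∃ C : ℝ, 0 ≤ C ∧ ∀ s ∈ Set.Icc a b, ‖U s‖ ≤ C := by
  have h : ∀ x : E, ∃ C, ∀ i : Set.Icc a b, ‖U i x‖ ≤ C := by
    intro x
    obtain ⟨C, hC⟩ := (isCompact_Icc (a := a) (b := b)).exists_bound_of_continuousOn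
      ((hc x).continuousOn)
    exact ⟨C, fun i => hC i i.2⟩
  obtain ⟨C, hC⟩ := banach_steinhaus h
  exact ⟨max C 0, le_max_right _ _, fun s hs => le_trans (hC ⟨s, hs⟩) (le_max_left _ _)⟩

lemma auxT_repr (A U : ℝ → E →L[ℝ] E) (hA : Continuous A)
    (hUderiv : ∀ (x : E) (t : ℝ), HasDerivAt (fun s => U s x) (A t (U t x)) t)
    (x : E) (t s : ℝ) :
    (∫ r in t..s, A r (U r x)) = U s x - U t x := by
  have hcont : Continuous fun r => A r (U r x) :=
    hA.clm_apply (continuous_iff_continuousAt.2 fun r => (hUderiv x r).continuousAt)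
  exact intervalIntegral.integral_eq_sub_of_hasDerivAt (fun r _ => hUderiv x r)
    (hcont.intervalIntegrable _ _)

lemma auxT_opCont (A U : ℝ → E →L[ℝ] E) (hA : Continuous A)
    (hUderiv : ∀ (x : E) (t : ℝ), HasDerivAt (fun s => U s x) (A t (U t x)) t) :
    Continuous fun s => U s := by
  rw [continuous_iff_continuousAt]
  intro t
  have hc : ∀ x : E, Continuous fun s => U s x :=
    fun x => continuous_iff_continuousAt.2 fun r => (hUderiv x r).continuousAt
  obtain ⟨C, hC0, hC⟩ := auxT_locBound U hc (t - 1) (t + 1)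
  obtain ⟨K, hK⟩ := (isCompact_Icc (a := t - 1) (b := t + 1)).exists_bound_of_continuousOn
    hA.continuousOn
  have hK0 : 0 ≤ K := le_trans (norm_nonneg _) (hK t (by constructor <;> linarith))
  have key : ∀ s ∈ Set.Icc (t - 1) (t + 1), ‖U s - U t‖ ≤ K * C * |s - t| := by
    intro s hs
    apply ContinuousLinearMap.opNorm_le_bound _ (by positivity)
    intro x
    rw [ContinuousLinearMap.sub_apply, ← auxT_repr A U hA hUderiv x t s]
    have hb : ∀ r ∈ Set.uIoc t s, ‖A r (U r x)‖ ≤ K * C * ‖x‖ := by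
      intro r hr
      have hr' : r ∈ Set.Icc (t - 1) (t + 1) := by
        rcases Set.mem_uIoc.1 hr with h | h
        · exact ⟨by linarith [hs.1, h.1], le_trans h.2 hs.2⟩
        · exact ⟨le_trans hs.1 h.1.le, by linarith [hs.2, h.2]⟩
      calc ‖A r (U r x)‖ ≤ ‖A r‖ * ‖U r x‖ := (A r).le_opNorm _
        _ ≤ K * (C * ‖x‖) := by
            apply mul_le_mul (hK r hr') (le_trans ((U r).le_opNorm x)
              (mul_le_mul_of_nonneg_right (hC r hr') (norm_nonneg x))) (norm_nonneg _) hK0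
        _ = K * C * ‖x‖ := by ring
    calc ‖∫ r in t..s, A r (U r x)‖ ≤ K * C * ‖x‖ * |s - t| :=
          intervalIntegral.norm_integral_le_of_norm_le_const hb
      _ = K * C * |s - t| * ‖x‖ := by ring
  have h0 : Tendsto (fun s => ‖U s - U t‖) (𝓝 t) (𝓝 0) := by
    apply squeeze_zero' (Filter.Eventually.of_forall fun s => norm_nonneg _)
    · filter_upwards [Icc_mem_nhds (by linarith : t - 1 < t) (by linarith : t < t + 1)] with s hs
      exact key s hs
    · have : Tendsto (fun s : ℝ => K * C * |s - t|) (𝓝 t) (𝓝 (K * C * |t - t|)) := by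
        apply Tendsto.const_mul
        exact (continuous_abs.comp (continuous_id.sub continuous_const)).tendsto t
      simpa using this
  exact tendsto_iff_norm_sub_tendsto_zero.2 h0

lemma auxT_opDeriv (A U : ℝ → E →L[ℝ] E) (hA : Continuous A)
    (hUderiv : ∀ (x : E) (t : ℝ), HasDerivAt (fun s => U s x) (A t (U t x)) t)
    (t : ℝ) : HasDerivAt (fun s => U s) (A t ∘L U t) t := by
  have hUC : ∀ x : E, Continuous fun s => U s x :=
    fun x => continuous_iff_continuousAt.2 fun r => (hUderiv x r).continuousAt
  rw [hasDerivAt_iff_isLittleO, Asymptotics.isLittleO_iff]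
  intro c hc
  have hg : ContinuousAt (fun r => A r ∘L U r) t :=
    (hA.clm_comp (auxT_opCont A U hA hUderiv)).continuousAt
  rcases Metric.continuousAt_iff.1 hg c hc with ⟨δ, hδ, hball⟩
  filter_upwards [Metric.ball_mem_nhds t hδ] with s hs
  rw [Metric.mem_ball, Real.dist_eq] at hs
  have hb : ∀ x : E, ‖(U s - U t - (s - t) • (A t ∘L U t)) x‖ ≤ c * |s - t| * ‖x‖ := by
    intro x
    have e1 : (U s - U t - (s - t) • (A t ∘L U t)) x
        = ∫ r in t..s, (A r (U r x) - A t (U t x)) := by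
      rw [intervalIntegral.integral_sub
        (((hA.clm_apply (hUC x))).intervalIntegrable _ _)
        (intervalIntegrable_const), auxT_repr A U hA hUderiv x t s,
        intervalIntegral.integral_const]
      simp [ContinuousLinearMap.sub_apply, ContinuousLinearMap.smul_apply]
    rw [e1]
    have hbd : ∀ r ∈ Set.uIoc t s, ‖A r (U r x) - A t (U t x)‖ ≤ c * ‖x‖ := by
      intro r hr
      have hrd : |r - t| < δ := by
        rcases Set.mem_uIoc.1 hr with h | h
        · rw [abs_sub_lt_iff]; rw [abs_sub_lt_iff] at hs
          constructor <;> [linarith [h.1, h.2, hs.1]; linarith [h.1, h.2, hs.2]]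
        · rw [abs_sub_lt_iff]; rw [abs_sub_lt_iff] at hs
          constructor <;> [linarith [h.1, h.2, hs.1]; linarith [h.1, h.2, hs.2]]
      have hd := hball (by rw [Real.dist_eq]; exact hrd)
      rw [dist_eq_norm] at hd
      calc ‖A r (U r x) - A t (U t x)‖ = ‖((A r ∘L U r) - (A t ∘L U t)) x‖ := by
            simp [ContinuousLinearMap.sub_apply]
        _ ≤ ‖(A r ∘L U r) - (A t ∘L U t)‖ * ‖x‖ := ContinuousLinearMap.le_opNorm _ _
        _ ≤ c * ‖x‖ := mul_le_mul_of_nonneg_right hd.le (norm_nonneg _)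
    calc ‖∫ r in t..s, (A r (U r x) - A t (U t x))‖ ≤ c * ‖x‖ * |s - t| :=
          intervalIntegral.norm_integral_le_of_norm_le_const hbd
      _ = c * |s - t| * ‖x‖ := by ring
  have hop := ContinuousLinearMap.opNorm_le_bound _
    (by positivity : (0:ℝ) ≤ c * |s - t|) hb
  calc ‖U s - U t - (s - t) • (A t ∘L U t)‖ ≤ c * |s - t| := hop
    _ = c * ‖s - t‖ := by rw [Real.norm_eq_abs]

lemma auxT_contV (U V : ℝ → E →L[ℝ] E)
    (hUV : ∀ t, U t ∘L V t = 1) (hVU : ∀ t, V t ∘L U t = 1)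
    (hUc : Continuous fun s => U s) : Continuous fun s => V s := by
  have hv : ∀ s, V s = Ring.inverse (U s) := by
    intro s
    rw [show U s = ((⟨U s, V s, hUV s, hVU s⟩ : (E →L[ℝ] E)ˣ) : E →L[ℝ] E) from rfl,
      Ring.inverse_unit]
    rfl
  rw [continuous_iff_continuousAt]
  intro t
  have h1 : ContinuousAt (Ring.inverse : (E →L[ℝ] E) → (E →L[ℝ] E)) (U t) :=
    NormedRing.inverse_continuousAt (⟨U t, V t, hUV t, hVU t⟩ : (E →L[ℝ] E)ˣ)
  have h2 : ContinuousAt (fun s => Ring.inverse (U s)) t := h1.comp hUc.continuousAt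
  simpa only [← hv] using h2

lemma auxT_expIoi (ν : ℝ) (hν : 0 < ν) (t : ℝ) :
    IntegrableOn (fun τ => exp (-ν * |t - τ|)) (Ioi t) ∧
      ∫ τ in Ioi t, exp (-ν * |t - τ|) = 1 / ν := by
  have heq : EqOn (fun τ => exp (ν * t) * exp (-ν * τ)) (fun τ => exp (-ν * |t - τ|)) (Ioi t) := by
    intro τ hτ
    have h : |t - τ| = τ - t := by rw [abs_of_nonpos (by linarith [mem_Ioi.1 hτ])]; ring
    simp only [h, ← Real.exp_add]
    ring_nf
  have hint : IntegrableOn (fun τ => exp (-ν * |t - τ|)) (Ioi t) :=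
    IntegrableOn.congr_fun ((exp_neg_integrableOn_Ioi t hν).const_mul (exp (ν * t))) heq
      measurableSet_Ioi
  refine ⟨hint, ?_⟩
  have hderiv : ∀ τ ∈ Ioi t, HasDerivAt (fun τ => -(exp (-ν * (τ - t))) / ν)
      (exp (-ν * |t - τ|)) τ := by
    intro τ hτ
    have h1 : HasDerivAt (fun τ : ℝ => -ν * (τ - t)) (-ν) τ := by
      simpa using ((hasDerivAt_id τ).sub_const t).const_mul (-ν)
    have h2 := h1.exp.neg.div_const ν
    have h3 : -(exp (-ν * (τ - t)) * -ν) / ν = exp (-ν * |t - τ|) := by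
      rw [abs_of_nonpos (by linarith [mem_Ioi.1 hτ] : t - τ ≤ 0), neg_sub]
      field_simp
    rwa [h3] at h2
  have hcont : ContinuousWithinAt (fun τ => -(exp (-ν * (τ - t))) / ν) (Ici t) t :=
    (Continuous.continuousWithinAt (by continuity))
  have htend : Tendsto (fun τ => -(exp (-ν * (τ - t))) / ν) atTop (𝓝 0) := by
    have h0 : Tendsto (fun τ : ℝ => τ - t) atTop atTop := by
      simpa [sub_eq_add_neg] using tendsto_atTop_add_const_right atTop (-t)
        (tendsto_id (α := ℝ))
    have h1 : Tendsto (fun τ : ℝ => -ν * (τ - t)) atTop atBot :=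
      Tendsto.const_mul_atTop_of_neg (by linarith) h0
    have h2 := (Real.tendsto_exp_atBot.comp h1).neg.div_const ν
    simpa using h2
  have := integral_Ioi_of_hasDerivAt_of_tendsto hcont hderiv hint htend
  rw [this, sub_self, mul_zero, Real.exp_zero]
  ring

lemma auxT_expIic (ν : ℝ) (hν : 0 < ν) (t : ℝ) :
    IntegrableOn (fun τ => exp (-ν * |t - τ|)) (Iic t) ∧
      ∫ τ in Iic t, exp (-ν * |t - τ|) = 1 / ν := by
  have hioi := auxT_expIoi ν hν (-t)
  have hint : IntegrableOn (fun τ => exp (-ν * |t - τ|)) (Iic t) := by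
    rw [integrableOn_Iic_iff_integrableOn_Iio]
    have h := (MeasurePreserving.integrableOn_comp_preimage
      (Measure.measurePreserving_neg (volume : Measure ℝ))
      (Homeomorph.neg ℝ).measurableEmbedding).2 hioi.1
    have hpre : (fun x : ℝ => -x) ⁻¹' (Ioi (-t)) = Iio t := by
      ext x; simp [Set.mem_preimage, lt_neg]
    rw [hpre] at h
    apply h.congr_fun _ measurableSet_Iio
    intro τ _
    simp only [Function.comp]
    congr 1
    rw [show -t - -τ = -(t - τ) by ring, abs_neg]
  refine ⟨hint, ?_⟩
  have hderiv : ∀ τ ∈ Iio t, HasDerivAt (fun τ => exp (-ν * (t - τ)) / ν)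
      (exp (-ν * |t - τ|)) τ := by
    intro τ hτ
    have h1 : HasDerivAt (fun τ : ℝ => -ν * (t - τ)) ν τ := by
      simpa using ((hasDerivAt_id τ).const_sub t).const_mul (-ν)
    have h2 := h1.exp.div_const ν
    have h3 : exp (-ν * (t - τ)) * ν / ν = exp (-ν * |t - τ|) := by
      rw [abs_of_nonneg (by linarith [mem_Iio.1 hτ] : (0:ℝ) ≤ t - τ)]
      field_simp
    rwa [h3] at h2
  have hcont : ContinuousWithinAt (fun τ => exp (-ν * (t - τ)) / ν) (Iic t) t :=
    (Continuous.continuousWithinAt (by continuity))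
  have htend : Tendsto (fun τ => exp (-ν * (t - τ)) / ν) atBot (𝓝 0) := by
    have h1 : Tendsto (fun τ : ℝ => -ν * (t - τ)) atBot atBot := by
      have h0 : Tendsto (fun τ : ℝ => ν * τ + -(ν * t)) atBot atBot :=
        tendsto_atBot_add_const_right _ _ ((tendsto_const_mul_atBot_of_pos hν).2
          (tendsto_id (α := ℝ)))
      exact h0.congr (fun τ => by ring)
    have h2 := (Real.tendsto_exp_atBot.comp h1).div_const ν
    simpa using h2
  have := integral_Iic_of_hasDerivAt_of_tendsto hcont hderiv hint htend
  rw [this]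
  norm_num

lemma auxT_expInt (ν : ℝ) (hν : 0 < ν) (t : ℝ) :
    Integrable (fun τ => exp (-ν * |t - τ|)) ∧
      ∫ τ : ℝ, exp (-ν * |t - τ|) = 2 / ν := by
  obtain ⟨hi1, he1⟩ := auxT_expIic ν hν t
  obtain ⟨hi2, he2⟩ := auxT_expIoi ν hν t
  have hun : IntegrableOn (fun τ => exp (-ν * |t - τ|)) (Iic t ∪ Ioi t) := hi1.union hi2
  rw [Set.Iic_union_Ioi] at hun
  have hint : Integrable (fun τ => exp (-ν * |t - τ|)) := integrableOn_univ.1 hun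
  refine ⟨hint, ?_⟩
  have h := integral_add_compl (measurableSet_Iic (a := t)) hint
  rw [Set.compl_Iic] at h
  rw [← h, he1, he2]
  ring

end AuxTrichotomy

/-- The Green function of an equation `x' = A(t)x` with exponential trichotomy on
`ℝ`, with Cauchy operator `U`, inverse `V` and trichotomy projections `P, Q`. -/
noncomputable def GreenT {E : Type*} [NormedAddCommGroup E] [NormedSpace ℝ E]
    (U V : ℝ → E →L[ℝ] E) (P Q : E →L[ℝ] E) (t τ : ℝ) : E →L[ℝ] E :=
  if 0 ≤ τ ∧ τ < t then U t ∘L P ∘L V τ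
  else if t ≤ τ ∧ 0 ≤ τ then -(U t ∘L (1 - P) ∘L V τ)
  else if t ≤ τ ∧ τ ≤ 0 then -(U t ∘L Q ∘L V τ)
  else U t ∘L (1 - Q) ∘L V τ

section GreenAux

variable {E : Type*} [NormedAddCommGroup E] [NormedSpace ℝ E]

lemma auxT_GreenBound (U V : ℝ → E →L[ℝ] E) (P Q : E →L[ℝ] E) (N ν : ℝ)
    (h1 : ∀ t τ : ℝ, 0 ≤ τ → τ ≤ t → ‖U t ∘L P ∘L V τ‖ ≤ N * exp (-ν * (t - τ)))
    (h2 : ∀ t τ : ℝ, t ≤ τ → 0 ≤ τ → ‖U t ∘L (1 - P) ∘L V τ‖ ≤ N * exp (-ν * (τ - t)))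
    (h3 : ∀ t τ : ℝ, t ≤ τ → τ ≤ 0 → ‖U t ∘L Q ∘L V τ‖ ≤ N * exp (-ν * (τ - t)))
    (h4 : ∀ t τ : ℝ, τ ≤ t → τ ≤ 0 → ‖U t ∘L (1 - Q) ∘L V τ‖ ≤ N * exp (-ν * (t - τ)))
    (t τ : ℝ) : ‖GreenT U V P Q t τ‖ ≤ N * exp (-ν * |t - τ|) := by
  unfold GreenT
  split_ifs with c1 c2 c3
  · rw [abs_of_nonneg (by linarith [c1.2] : (0:ℝ) ≤ t - τ)]
    exact h1 t τ c1.1 c1.2.le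
  · rw [norm_neg, abs_of_nonpos (by linarith [c2.1] : t - τ ≤ 0), neg_sub]
    exact h2 t τ c2.1 c2.2
  · rw [norm_neg, abs_of_nonpos (by linarith [c3.1] : t - τ ≤ 0), neg_sub]
    exact h3 t τ c3.1 c3.2
  · push_neg at c1 c2 c3
    have hτ0 : τ ≤ 0 := by
      by_contra h
      push_neg at h
      exact absurd (c2 (c1 h.le)) (by linarith)
    have hτt : τ ≤ t := by
      by_contra h
      push_neg at h
      exact absurd (c3 h.le) (by linarith)
    rw [abs_of_nonneg (by linarith : (0:ℝ) ≤ t - τ)]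
    exact h4 t τ hτt hτ0

lemma auxT_G1 (U V : ℝ → E →L[ℝ] E) (P Q : E →L[ℝ] E) {a τ : ℝ} (h0 : 0 ≤ τ) (h1 : τ < a) :
    GreenT U V P Q a τ = U a ∘L P ∘L V τ := by
  unfold GreenT; rw [if_pos ⟨h0, h1⟩]

lemma auxT_G2 (U V : ℝ → E →L[ℝ] E) (P Q : E →L[ℝ] E) {a τ : ℝ} (ha : a ≤ τ) (h0 : 0 ≤ τ) :
    GreenT U V P Q a τ = -(U a ∘L (1 - P) ∘L V τ) := by
  unfold GreenT
  rw [if_neg (by rintro ⟨-, h⟩; exact absurd ha (not_le.2 h)), if_pos ⟨ha, h0⟩]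

lemma auxT_G3 (U V : ℝ → E →L[ℝ] E) (P Q : E →L[ℝ] E) {a τ : ℝ} (ha : a ≤ τ) (h0 : τ < 0) :
    GreenT U V P Q a τ = -(U a ∘L Q ∘L V τ) := by
  unfold GreenT
  rw [if_neg (by rintro ⟨h, -⟩; exact absurd h (not_le.2 h0)),
    if_neg (by rintro ⟨-, h⟩; exact absurd h (not_le.2 h0)), if_pos ⟨ha, h0.le⟩]

lemma auxT_G4 (U V : ℝ → E →L[ℝ] E) (P Q : E →L[ℝ] E) {a τ : ℝ} (ha : τ < a) (h0 : τ < 0) :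
    GreenT U V P Q a τ = U a ∘L (1 - Q) ∘L V τ := by
  unfold GreenT
  rw [if_neg (by rintro ⟨h, -⟩; exact absurd h (not_le.2 h0)),
    if_neg (by rintro ⟨h, -⟩; exact absurd h (not_le.2 ha)),
    if_neg (by rintro ⟨h, -⟩; exact absurd h (not_le.2 ha))]

end GreenAux

/-- If `x' = A(t)x` has exponential trichotomy on `ℝ` with constants `N, ν`, then
for every bounded continuous `f`, `φ(t) = ∫_{-∞}^{∞} G(t,τ) f(τ) dτ` is a bounded
solution of `x' = A(t)x + f(t)` with `‖φ‖ ≤ (2N/ν)‖f‖`. -/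
theorem stmt10 {E : Type*} [NormedAddCommGroup E] [NormedSpace ℝ E]
    [CompleteSpace E]
    (A U V : ℝ → E →L[ℝ] E)
    (hA : Continuous A) (hU0 : U 0 = 1)
    (hUV : ∀ t, U t ∘L V t = 1) (hVU : ∀ t, V t ∘L U t = 1)
    (hUderiv : ∀ (x : E) (t : ℝ), HasDerivAt (fun s => U s x) (A t (U t x)) t)
    (P Q : E →L[ℝ] E)
    (hP : P ∘L P = P) (hQ : Q ∘L Q = Q)
    (hPQ : P ∘L Q = Q ∘L P) (hsum : P + Q - P ∘L Q = 1)
    (N ν : ℝ) (hN : 1 ≤ N) (hν : 0 < ν)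
    (h1 : ∀ t τ : ℝ, 0 ≤ τ → τ ≤ t →
      ‖U t ∘L P ∘L V τ‖ ≤ N * exp (-ν * (t - τ)))
    (h2 : ∀ t τ : ℝ, t ≤ τ → 0 ≤ τ →
      ‖U t ∘L (1 - P) ∘L V τ‖ ≤ N * exp (-ν * (τ - t)))
    (h3 : ∀ t τ : ℝ, t ≤ τ → τ ≤ 0 →
      ‖U t ∘L Q ∘L V τ‖ ≤ N * exp (-ν * (τ - t)))
    (h4 : ∀ t τ : ℝ, τ ≤ t → τ ≤ 0 →
      ‖U t ∘L (1 - Q) ∘L V τ‖ ≤ N * exp (-ν * (t - τ)))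
    (f : ℝ → E) (hf : Continuous f) (M : ℝ) (hM : ∀ t, ‖f t‖ ≤ M) :
    (∀ t : ℝ, HasDerivAt (fun s : ℝ => ∫ τ : ℝ, GreenT U V P Q s τ (f τ))
        (A t (∫ τ : ℝ, GreenT U V P Q t τ (f τ)) + f t) t) ∧
      ∀ t : ℝ, ‖∫ τ : ℝ, GreenT U V P Q t τ (f τ)‖ ≤ 2 * N / ν * M := by
  have hUcont : Continuous fun s => U s := auxT_opCont A U hA hUderiv
  have hVcont : Continuous fun s => V s := auxT_contV U V hUV hVU hUcont
  have hw : Continuous fun τ => V τ (f τ) := hVcont.clm_apply hf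
  have hM0 : 0 ≤ M := le_trans (norm_nonneg _) (hM 0)
  have hN0 : (0:ℝ) < N := lt_of_lt_of_le one_pos hN
  have hGb := auxT_GreenBound U V P Q N ν h1 h2 h3 h4
  -- strong measurability
  have hmeas : ∀ t : ℝ, StronglyMeasurable (fun τ => GreenT U V P Q t τ (f τ)) := by
    intro t
    have hfun : (fun τ => GreenT U V P Q t τ (f τ)) = fun τ =>
        if 0 ≤ τ ∧ τ < t then (U t ∘L P) (V τ (f τ))
        else if t ≤ τ ∧ 0 ≤ τ then -((U t ∘L (1 - P)) (V τ (f τ)))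
        else if t ≤ τ ∧ τ ≤ 0 then -((U t ∘L Q) (V τ (f τ)))
        else (U t ∘L (1 - Q)) (V τ (f τ)) := by
      funext τ
      simp only [GreenT]
      split_ifs <;> rfl
    rw [hfun]
    have m1 : MeasurableSet {τ : ℝ | 0 ≤ τ ∧ τ < t} :=
      (measurableSet_le measurable_const measurable_id).inter
        (measurableSet_lt measurable_id measurable_const)
    have m2 : MeasurableSet {τ : ℝ | t ≤ τ ∧ 0 ≤ τ} :=
      (measurableSet_le measurable_const measurable_id).inter
        (measurableSet_le measurable_const measurable_id)
    have m3 : MeasurableSet {τ : ℝ | t ≤ τ ∧ τ ≤ 0} :=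
      (measurableSet_le measurable_const measurable_id).inter
        (measurableSet_le measurable_id measurable_const)
    exact StronglyMeasurable.ite m1 (continuous_const.clm_apply hw).stronglyMeasurable
      (StronglyMeasurable.ite m2 (continuous_const.clm_apply hw).neg.stronglyMeasurable
        (StronglyMeasurable.ite m3 (continuous_const.clm_apply hw).neg.stronglyMeasurable
          (continuous_const.clm_apply hw).stronglyMeasurable))
  -- integrability
  have hptbd : ∀ t τ : ℝ, ‖GreenT U V P Q t τ (f τ)‖ ≤ N * M * exp (-ν * |t - τ|) := by
    intro t τ
    calc ‖GreenT U V P Q t τ (f τ)‖ ≤ ‖GreenT U V P Q t τ‖ * ‖f τ‖ :=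
          ContinuousLinearMap.le_opNorm _ _
      _ ≤ (N * exp (-ν * |t - τ|)) * M :=
          mul_le_mul (hGb t τ) (hM τ) (norm_nonneg _) (by positivity)
      _ = N * M * exp (-ν * |t - τ|) := by ring
  have hint : ∀ t : ℝ, Integrable (fun τ => GreenT U V P Q t τ (f τ)) := by
    intro t
    apply Integrable.mono' ((auxT_expInt ν hν t).1.const_mul (N * M))
      (hmeas t).aestronglyMeasurable
    exact Eventually.of_forall (hptbd t)
  -- norm bound
  have hbnd : ∀ t : ℝ, ‖∫ τ : ℝ, GreenT U V P Q t τ (f τ)‖ ≤ 2 * N / ν * M := by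
    intro t
    calc ‖∫ τ : ℝ, GreenT U V P Q t τ (f τ)‖
        ≤ ∫ τ : ℝ, N * M * exp (-ν * |t - τ|) :=
          norm_integral_le_of_norm_le ((auxT_expInt ν hν t).1.const_mul (N * M))
            (Eventually.of_forall (hptbd t))
      _ = N * M * (2 / ν) := by
          rw [MeasureTheory.integral_const_mul, (auxT_expInt ν hν t).2]
      _ = 2 * N / ν * M := by field_simp
  -- the key identity
  have hkey : ∀ t : ℝ, (∫ τ : ℝ, GreenT U V P Q t τ (f τ))
      = U t ((∫ τ : ℝ, GreenT U V P Q 0 τ (f τ)) + ∫ τ in (0:ℝ)..t, V τ (f τ)) := by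
    intro t
    set w : ℝ → E := fun τ => U t (V τ (f τ)) with hwdef
    have hwc : Continuous w := (U t).continuous.comp hw
    have hUg : Integrable (fun τ => U t (GreenT U V P Q 0 τ (f τ))) :=
      (U t).integrable_comp (hint 0)
    have hdiff : ∀ τ : ℝ, τ ≠ 0 → τ ≠ t →
        GreenT U V P Q t τ (f τ) - U t (GreenT U V P Q 0 τ (f τ))
          = Set.indicator (Set.Ioc 0 t) w τ - Set.indicator (Set.Ioc t 0) w τ := by
      intro τ hτ0 hτt
      rcases hτ0.lt_or_gt with hτneg | hτpos
      · rcases hτt.lt_or_gt with hlt | hgt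
        · -- τ < 0, τ < t : both use the fourth branch; difference is 0
          rw [auxT_G4 U V P Q hlt hτneg, auxT_G4 U V P Q hτneg hτneg,
            Set.indicator_of_notMem (by rw [Set.mem_Ioc]; push_neg; intro h; linarith),
            Set.indicator_of_notMem (by rw [Set.mem_Ioc]; push_neg; intro h; linarith)]
          simp [hU0]
        · -- t < τ < 0
          rw [auxT_G3 U V P Q hgt.le hτneg, auxT_G4 U V P Q hτneg hτneg,
            Set.indicator_of_notMem (by rw [Set.mem_Ioc]; push_neg; intro h; linarith),
            Set.indicator_of_mem (by rw [Set.mem_Ioc]; exact ⟨hgt, hτneg.le⟩)]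
          simp only [hwdef, hU0, ContinuousLinearMap.comp_apply,
            ContinuousLinearMap.neg_apply, ContinuousLinearMap.sub_apply,
            ContinuousLinearMap.one_apply, map_sub, zero_sub]
          abel
      · rcases hτt.lt_or_gt with hlt | hgt
        · -- 0 < τ < t
          rw [auxT_G1 U V P Q hτpos.le hlt, auxT_G2 U V P Q hτpos.le hτpos.le,
            Set.indicator_of_mem (by rw [Set.mem_Ioc]; exact ⟨hτpos, hlt.le⟩),
            Set.indicator_of_notMem (by rw [Set.mem_Ioc]; push_neg; intro h; linarith)]
          simp only [hwdef, hU0, ContinuousLinearMap.comp_apply,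
            ContinuousLinearMap.neg_apply, ContinuousLinearMap.sub_apply,
            ContinuousLinearMap.one_apply, map_neg, map_sub, sub_zero]
          abel
        · -- 0 < τ, t < τ : both use second branch
          rw [auxT_G2 U V P Q hgt.le hτpos.le, auxT_G2 U V P Q hτpos.le hτpos.le,
            Set.indicator_of_notMem (by rw [Set.mem_Ioc]; push_neg; intro h; linarith),
            Set.indicator_of_notMem (by rw [Set.mem_Ioc]; push_neg; intro h; linarith)]
          simp [hU0]
    have hIoc1 : Integrable (Set.indicator (Set.Ioc (0:ℝ) t) w) := by
      rw [integrable_indicator_iff measurableSet_Ioc]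
      exact hwc.integrableOn_Ioc
    have hIoc2 : Integrable (Set.indicator (Set.Ioc t (0:ℝ)) w) := by
      rw [integrable_indicator_iff measurableSet_Ioc]
      exact hwc.integrableOn_Ioc
    have hae0 : ∀ᵐ τ : ℝ, τ ≠ (0:ℝ) := by
      rw [ae_iff]
      simp only [ne_eq, not_not, Set.setOf_eq_eq_singleton]
      exact Real.volume_singleton
    have haet : ∀ᵐ τ : ℝ, τ ≠ t := by
      rw [ae_iff]
      simp only [ne_eq, not_not, Set.setOf_eq_eq_singleton]
      exact Real.volume_singleton
    have e1 : (fun τ : ℝ => GreenT U V P Q t τ (f τ) - U t (GreenT U V P Q 0 τ (f τ)))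
        =ᵐ[volume] fun τ =>
          Set.indicator (Set.Ioc 0 t) w τ - Set.indicator (Set.Ioc t 0) w τ := by
      filter_upwards [hae0, haet] with τ hh0 hht
      exact hdiff τ hh0 hht
    have e2 : (∫ τ : ℝ, GreenT U V P Q t τ (f τ)) - U t (∫ τ : ℝ, GreenT U V P Q 0 τ (f τ))
        = ∫ τ in (0:ℝ)..t, w τ := by
      rw [← ContinuousLinearMap.integral_comp_comm (U t) (hint 0),
        ← integral_sub (hint t) hUg, integral_congr_ae e1, integral_sub hIoc1 hIoc2,
        MeasureTheory.integral_indicator measurableSet_Ioc, MeasureTheory.integral_indicator measurableSet_Ioc]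
      rcases le_total 0 t with h | h
      · rw [intervalIntegral.integral_of_le h,
          Set.Ioc_eq_empty (not_lt.2 h), Measure.restrict_empty,
          integral_zero_measure, sub_zero]
      · rw [intervalIntegral.integral_symm, intervalIntegral.integral_of_le h,
          Set.Ioc_eq_empty (not_lt.2 h), Measure.restrict_empty,
          integral_zero_measure, zero_sub]
    have e3 : ∫ τ in (0:ℝ)..t, w τ = U t (∫ τ in (0:ℝ)..t, V τ (f τ)) :=
      (U t).intervalIntegral_comp_comm (hw.intervalIntegrable _ _)
    rw [e3] at e2
    have e4 := sub_eq_iff_eq_add.1 e2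
    rw [e4, ← map_add]
    exact congrArg _ (add_comm _ _)
  refine ⟨?_, hbnd⟩
  intro t
  have hc : HasDerivAt
      (fun s : ℝ => (∫ τ : ℝ, GreenT U V P Q 0 τ (f τ)) + ∫ τ in (0:ℝ)..s, V τ (f τ))
      (V t (f t)) t :=
    ((hw.integral_hasStrictDerivAt 0 t).hasDerivAt).const_add _
  have hder := (auxT_opDeriv A U hA hUderiv t).clm_apply hc
  have hfn : (fun s : ℝ => ∫ τ : ℝ, GreenT U V P Q s τ (f τ))
      = fun s : ℝ => U s ((∫ τ : ℝ, GreenT U V P Q 0 τ (f τ)) + ∫ τ in (0:ℝ)..s, V τ (f τ)) :=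
    funext hkey
  have hval : (A t ∘L U t) ((∫ τ : ℝ, GreenT U V P Q 0 τ (f τ)) + ∫ τ in (0:ℝ)..t, V τ (f τ))
      + U t (V t (f t)) = A t (∫ τ : ℝ, GreenT U V P Q t τ (f τ)) + f t := by
    rw [ContinuousLinearMap.comp_apply, ← hkey t]
    congr 1
    calc U t (V t (f t)) = (U t ∘L V t) (f t) := rfl
      _ = f t := by rw [hUV t]; rfl
  rw [hfn]
  exact hval ▸ hder
end

section
/- Suppose the equation x' = A(t)x has an exponential dichotomy on ℝ₊ with projection P₊ and on ℝ₋ with projection P₋, satisfying P₊P₋ = P₋P₊ = P₋. Then, setting P := P₊ and Q := I − P₋, the equation has an exponential trichotomy on ℝ (with possibly modified constants). -/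
open Real

private lemma comp_bound {E : Type*} [NormedAddCommGroup E] [NormedSpace ℝ E]
    (f g : E →L[ℝ] E) (M₁ M₂ a b c : ℝ)
    (h1 : ‖f‖ ≤ M₁ * exp a) (h2 : ‖g‖ ≤ M₂ * exp b)
    (hM1 : 0 ≤ M₁) (hM2 : 0 ≤ M₂) (hab : a + b ≤ c) :
    ‖f ∘L g‖ ≤ M₁ * M₂ * exp c := by
  calc ‖f ∘L g‖ ≤ ‖f‖ * ‖g‖ := ContinuousLinearMap.opNorm_comp_le f g
    _ ≤ (M₁ * exp a) * (M₂ * exp b) := by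
        apply mul_le_mul h1 h2 (norm_nonneg _)
        positivity
    _ = M₁ * M₂ * exp (a + b) := by rw [exp_add]; ring
    _ ≤ M₁ * M₂ * exp c := by
        apply mul_le_mul_of_nonneg_left (exp_le_exp.2 hab)
        positivity

private lemma single_bound {E : Type*} [NormedAddCommGroup E] [NormedSpace ℝ E]
    (f : E →L[ℝ] E) (M₁ M₂ a c : ℝ)
    (h1 : ‖f‖ ≤ M₁ * exp a) (hM1 : 0 ≤ M₁) (hM2 : 1 ≤ M₂) (hac : a ≤ c) :
    ‖f‖ ≤ M₁ * M₂ * exp c := by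
  calc ‖f‖ ≤ M₁ * exp a := h1
    _ ≤ M₁ * exp c := mul_le_mul_of_nonneg_left (exp_le_exp.2 hac) hM1
    _ ≤ M₁ * M₂ * exp c := by nlinarith [exp_pos c, mul_nonneg hM1 (exp_pos c).le]

/-- If `x' = A(t)x` has exponential dichotomies on `ℝ₊` (projection `P₊`) and on
`ℝ₋` (projection `P₋`) with `P₊P₋ = P₋P₊ = P₋`, then, with `P := P₊` and
`Q := I - P₋`, it has an exponential trichotomy on `ℝ` (with possibly modified
constants). -/
theorem stmt11 {E : Type*} [NormedAddCommGroup E] [NormedSpace ℝ E]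
    (A U V : ℝ → E →L[ℝ] E)
    (hA : Continuous A) (hU0 : U 0 = 1)
    (hUV : ∀ t, U t ∘L V t = 1) (hVU : ∀ t, V t ∘L U t = 1)
    (hUderiv : ∀ (x : E) (t : ℝ), HasDerivAt (fun s => U s x) (A t (U t x)) t)
    (Pp Pm : E →L[ℝ] E)
    (hPp : Pp ∘L Pp = Pp) (hPm : Pm ∘L Pm = Pm)
    (hc1 : Pp ∘L Pm = Pm) (hc2 : Pm ∘L Pp = Pm)
    (N₁ ν₁ : ℝ) (hN₁ : 1 ≤ N₁) (hν₁ : 0 < ν₁)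
    (hd1 : ∀ t τ : ℝ, 0 ≤ τ → τ ≤ t →
      ‖U t ∘L Pp ∘L V τ‖ ≤ N₁ * exp (-ν₁ * (t - τ)))
    (hd2 : ∀ t τ : ℝ, 0 ≤ t → t ≤ τ →
      ‖U t ∘L (1 - Pp) ∘L V τ‖ ≤ N₁ * exp (ν₁ * (t - τ)))
    (N₂ ν₂ : ℝ) (hN₂ : 1 ≤ N₂) (hν₂ : 0 < ν₂)
    (hd3 : ∀ t τ : ℝ, τ ≤ t → t ≤ 0 →
      ‖U t ∘L Pm ∘L V τ‖ ≤ N₂ * exp (-ν₂ * (t - τ)))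
    (hd4 : ∀ t τ : ℝ, t ≤ τ → τ ≤ 0 →
      ‖U t ∘L (1 - Pm) ∘L V τ‖ ≤ N₂ * exp (ν₂ * (t - τ))) :
    (Pp ∘L (1 - Pm) = (1 - Pm) ∘L Pp) ∧
      (Pp + (1 - Pm) - Pp ∘L (1 - Pm) = 1) ∧
      ∃ N : ℝ, 1 ≤ N ∧ ∃ ν : ℝ, 0 < ν ∧
        (∀ t τ : ℝ, 0 ≤ τ → τ ≤ t →
          ‖U t ∘L Pp ∘L V τ‖ ≤ N * exp (-ν * (t - τ))) ∧
        (∀ t τ : ℝ, t ≤ τ → 0 ≤ τ →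
          ‖U t ∘L (1 - Pp) ∘L V τ‖ ≤ N * exp (-ν * (τ - t))) ∧
        (∀ t τ : ℝ, t ≤ τ → τ ≤ 0 →
          ‖U t ∘L (1 - Pm) ∘L V τ‖ ≤ N * exp (-ν * (τ - t))) ∧
        (∀ t τ : ℝ, τ ≤ t → τ ≤ 0 →
          ‖U t ∘L (1 - (1 - Pm)) ∘L V τ‖ ≤ N * exp (-ν * (t - τ))) := by
  have hV0 : V 0 = 1 := by
    have h := hVU 0
    rw [hU0] at h
    simpa using (show V 0 * 1 = 1 from h)
  have hc1' : Pp * Pm = Pm := hc1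
  have hc2' : Pm * Pp = Pm := hc2
  have hA1 : (1 - Pm) * (1 - Pp) = 1 - Pp := by
    rw [sub_mul, one_mul, mul_sub, mul_one, hc2']; abel
  have hN₁0 : (0:ℝ) ≤ N₁ := by linarith
  have hN₂0 : (0:ℝ) ≤ N₂ := by linarith
  set ν : ℝ := min ν₁ ν₂ with hν
  have hν0 : 0 < ν := lt_min hν₁ hν₂
  have hνa : ν ≤ ν₁ := min_le_left _ _
  have hνb : ν ≤ ν₂ := min_le_right _ _
  refine ⟨?_, ?_, N₁ * N₂, ?_, ν, hν0, ?_, ?_, ?_, ?_⟩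
  · show Pp * (1 - Pm) = (1 - Pm) * Pp
    rw [mul_sub, mul_one, sub_mul, one_mul, hc1', hc2']
  · show Pp + (1 - Pm) - Pp * (1 - Pm) = 1
    rw [mul_sub, mul_one, hc1']; abel
  · nlinarith
  · -- t ≥ τ ≥ 0
    intro t τ hτ hτt
    refine single_bound _ N₁ N₂ _ _ (hd1 t τ hτ hτt) hN₁0 hN₂ ?_
    nlinarith [mul_le_mul_of_nonneg_right hνa (by linarith : (0:ℝ) ≤ t - τ)]
  · -- t ≤ τ, 0 ≤ τ
    intro t τ htτ hτ
    rcases le_or_gt 0 t with ht | ht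
    · refine single_bound _ N₁ N₂ _ _ (hd2 t τ ht htτ) hN₁0 hN₂ ?_
      nlinarith [mul_le_mul_of_nonneg_right hνa (by linarith : (0:ℝ) ≤ τ - t)]
    · have key : U t ∘L (1 - Pp) ∘L V τ
          = (U t ∘L (1 - Pm) ∘L V 0) ∘L (U 0 ∘L (1 - Pp) ∘L V τ) := by
        rw [hV0, hU0]
        show U t * ((1 - Pp) * V τ) = (U t * ((1 - Pm) * 1)) * (1 * ((1 - Pp) * V τ))
        rw [mul_one, one_mul, mul_assoc, ← mul_assoc (1 - Pm), hA1]
      rw [key]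
      have hexp : ν₂ * (t - 0) + ν₁ * (0 - τ) ≤ -ν * (τ - t) := by
        have e1 : (ν₂ - ν) * t ≤ 0 := mul_nonpos_of_nonneg_of_nonpos (by linarith) ht.le
        have e2 : 0 ≤ (ν₁ - ν) * τ := mul_nonneg (by linarith) hτ
        nlinarith
      have := comp_bound _ _ N₂ N₁ _ _ _ (hd4 t 0 ht.le le_rfl)
        (hd2 0 τ le_rfl hτ) hN₂0 hN₁0 hexp
      exact this.trans_eq (by ring)
  · -- t ≤ τ ≤ 0
    intro t τ htτ hτ
    have hexp : ν₂ * (t - τ) ≤ -ν * (τ - t) := by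
      nlinarith [mul_nonpos_of_nonneg_of_nonpos (by linarith : (0:ℝ) ≤ ν₂ - ν)
        (by linarith : t - τ ≤ 0)]
    exact (single_bound _ N₂ N₁ _ _ (hd4 t τ htτ hτ) hN₂0 hN₁ hexp).trans_eq (by ring)
  · -- τ ≤ t, τ ≤ 0
    intro t τ hτt hτ
    have hsub : (1 : E →L[ℝ] E) - (1 - Pm) = Pm := by abel
    rw [hsub]
    rcases le_or_gt t 0 with ht | ht
    · have hexp : -ν₂ * (t - τ) ≤ -ν * (t - τ) := by
        nlinarith [mul_le_mul_of_nonneg_right hνb (by linarith : (0:ℝ) ≤ t - τ)]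
      exact (single_bound _ N₂ N₁ _ _ (hd3 t τ hτt ht) hN₂0 hN₁ hexp).trans_eq (by ring)
    · have key : U t ∘L Pm ∘L V τ
          = (U t ∘L Pp ∘L V 0) ∘L (U 0 ∘L Pm ∘L V τ) := by
        rw [hV0, hU0]
        show U t * (Pm * V τ) = (U t * (Pp * 1)) * (1 * (Pm * V τ))
        rw [mul_one, one_mul, mul_assoc, ← mul_assoc Pp, hc1']
      rw [key]
      have hexp : -ν₁ * (t - 0) + -ν₂ * (0 - τ) ≤ -ν * (t - τ) := by
        have e1 : 0 ≤ (ν₁ - ν) * t := mul_nonneg (by linarith) ht.le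
        have e2 : (ν₂ - ν) * τ ≤ 0 := mul_nonpos_of_nonneg_of_nonpos (by linarith) hτ
        nlinarith
      exact comp_bound _ _ N₁ N₂ _ _ _ (hd1 t 0 le_rfl ht.le)
        (hd3 0 τ hτ le_rfl) hN₁0 hN₂0 hexp
end
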